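/- arXiv:2405.12973 — 2 statements merged into one kernel-verified Lean document; each statement's English description precedes it below -/
import Mathlib

section
/- Let K ⊆ ℝ^n be a proper convex cone and let q(x) = xᵀQx be a quadratic form whose real symmetric matrix Q has exactly one positive eigenvalue (counted with multiplicity). Then q is K-Lorentzian if and only if xᵀQx > 0 for every x in the interior of K. -/
open Matrix

/-- The number of positive eigenvalues (with multiplicity) of a real symmetric matrix. -/
noncomputable def posEigCount {n : ℕ} (Q : Matrix (Fin n) (Fin n) ℝ) : ℕ :=
  @dite _ Q.IsHermitian (Classical.dec _)
    (fun h => (Finset.univ.filter fun i => 0 < h.eigenvalues i).card)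
    (fun _ => 0)

/-- A proper convex cone: a closed convex cone that is pointed and solid. -/
def IsProperCone {n : ℕ} (K : Set (Fin n → ℝ)) : Prop :=
  Convex ℝ K ∧ (∀ c : ℝ, 0 ≤ c → ∀ x ∈ K, c • x ∈ K) ∧
    IsClosed K ∧ K ∩ (-K) = {0} ∧ (interior K).Nonempty

/-- The dual cone of `K` with respect to the standard inner product. -/
def dualConeSet {n : ℕ} (K : Set (Fin n → ℝ)) : Set (Fin n → ℝ) :=
  {y | ∀ x ∈ K, 0 ≤ y ⬝ᵥ x}

/-- The quadratic form with symmetric matrix `Q` is `K`-Lorentzian: `Q` has exactly one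
positive eigenvalue and `yᵀQx > 0` for all `x, y` in the interior of `K`. -/
def IsLorentzianMatrix {n : ℕ} (K : Set (Fin n → ℝ)) (Q : Matrix (Fin n) (Fin n) ℝ) : Prop :=
  posEigCount Q = 1 ∧ ∀ x ∈ interior K, ∀ y ∈ interior K, 0 < y ⬝ᵥ (Q *ᵥ x)

/-- A nonzero `v ∈ K` spans an extreme ray of `K`. -/
def SpansExtremeRay {n : ℕ} (K : Set (Fin n → ℝ)) (v : Fin n → ℝ) : Prop :=
  v ∈ K ∧ v ≠ 0 ∧ ∀ x ∈ K, ∀ y ∈ K, v = x + y →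
    (∃ c : ℝ, 0 ≤ c ∧ x = c • v) ∧ (∃ c : ℝ, 0 ≤ c ∧ y = c • v)

lemma quad_eq_sum {n : ℕ} (Q : Matrix (Fin n) (Fin n) ℝ) (hsymm : Q.IsHermitian) (v : Fin n → ℝ) :
    v ⬝ᵥ Q *ᵥ v = ∑ i, hsymm.eigenvalues i *
      ((star (hsymm.eigenvectorUnitary : Matrix (Fin n) (Fin n) ℝ) *ᵥ v) i)^2 := by
  conv_lhs => rw [hsymm.spectral_theorem, Unitary.conjStarAlgAut_apply]
  rw [← mulVec_mulVec, ← mulVec_mulVec, dotProduct_mulVec]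
  have h1 : v ᵥ* (hsymm.eigenvectorUnitary : Matrix (Fin n) (Fin n) ℝ)
      = star (hsymm.eigenvectorUnitary : Matrix (Fin n) (Fin n) ℝ) *ᵥ v := by
    rw [← mulVec_transpose, star_eq_conjTranspose, conjTranspose_eq_transpose_of_trivial]
  rw [h1]
  simp only [dotProduct, mulVec_diagonal, Function.comp_apply, RCLike.ofReal_real_eq_id, id_eq]
  exact Finset.sum_congr rfl fun i _ => by ring

lemma dot_symm {n : ℕ} (Q : Matrix (Fin n) (Fin n) ℝ) (hsymm : Q.IsHermitian)
    (x y : Fin n → ℝ) : x ⬝ᵥ Q *ᵥ y = y ⬝ᵥ Q *ᵥ x := by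
  rw [dotProduct_mulVec, ← mulVec_transpose]
  have : Qᵀ = Q := by
    rw [← conjTranspose_eq_transpose_of_trivial]; exact hsymm
  rw [this, dotProduct_comm]

lemma key {n : ℕ} (Q : Matrix (Fin n) (Fin n) ℝ) (hsymm : Q.IsHermitian)
    (heig : posEigCount Q = 1) (x y : Fin n → ℝ)
    (hx : 0 < x ⬝ᵥ Q *ᵥ x) (hy : 0 < y ⬝ᵥ Q *ᵥ y) : x ⬝ᵥ Q *ᵥ y ≠ 0 := by
  intro h
  have hyx : y ⬝ᵥ Q *ᵥ x = 0 := by rw [dot_symm Q hsymm]; exact h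
  -- unique positive eigenvalue
  have heq : (Finset.univ.filter fun i => 0 < hsymm.eigenvalues i).card = 1 := by
    rw [posEigCount, dif_pos hsymm] at heig
    exact heig
  obtain ⟨i₀, hi₀⟩ := Finset.card_eq_one.mp heq
  have hneg : ∀ j, j ≠ i₀ → hsymm.eigenvalues j ≤ 0 := by
    intro j hj
    by_contra hc
    push_neg at hc
    have : j ∈ Finset.univ.filter fun i => 0 < hsymm.eigenvalues i := by
      simp [hc]
    rw [hi₀, Finset.mem_singleton] at this
    exact hj this
  set U : Matrix (Fin n) (Fin n) ℝ := (hsymm.eigenvectorUnitary : Matrix (Fin n) (Fin n) ℝ)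
  set φ : (Fin n → ℝ) → ℝ := fun v => (star U *ᵥ v) i₀ with hφ
  set α := φ y
  set β := φ x
  -- choose v with φ v = 0 and v ⬝ᵥ Q *ᵥ v > 0
  obtain ⟨v, hv0, hvpos⟩ : ∃ v : Fin n → ℝ, φ v = 0 ∧ 0 < v ⬝ᵥ Q *ᵥ v := by
    by_cases hαβ : α = 0 ∧ β = 0
    · exact ⟨x, hαβ.2, hx⟩
    · refine ⟨α • x - β • y, ?_, ?_⟩
      · simp only [hφ, mulVec_sub, mulVec_smul, Pi.sub_apply, Pi.smul_apply, smul_eq_mul]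
        ring
      · have hexp : (α • x - β • y) ⬝ᵥ Q *ᵥ (α • x - β • y)
            = α^2 * (x ⬝ᵥ Q *ᵥ x) + β^2 * (y ⬝ᵥ Q *ᵥ y)
              - α*β*(x ⬝ᵥ Q *ᵥ y) - α*β*(y ⬝ᵥ Q *ᵥ x) := by
          simp only [mulVec_sub, mulVec_smul, sub_dotProduct, dotProduct_sub,
            smul_dotProduct, dotProduct_smul, smul_eq_mul]
          ring
        rw [hexp, h, hyx]
        have h1 : 0 ≤ α^2 * (x ⬝ᵥ Q *ᵥ x) := mul_nonneg (sq_nonneg _) hx.le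
        have h2 : 0 ≤ β^2 * (y ⬝ᵥ Q *ᵥ y) := mul_nonneg (sq_nonneg _) hy.le
        rcases not_and_or.mp hαβ with hα | hβ
        · have hα2 : 0 < α ^ 2 := by positivity
          have := mul_pos hα2 hx
          linarith
        · have hβ2 : 0 < β ^ 2 := by positivity
          have := mul_pos hβ2 hy
          linarith
  -- but v ⬝ᵥ Q *ᵥ v ≤ 0
  have : v ⬝ᵥ Q *ᵥ v ≤ 0 := by
    rw [quad_eq_sum Q hsymm v]
    apply Finset.sum_nonpos
    intro j _
    by_cases hj : j = i₀
    · subst hj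
      rw [show (star U *ᵥ v) j = 0 from hv0]
      simp
    · exact mul_nonpos_of_nonpos_of_nonneg (hneg j hj) (sq_nonneg _)
  linarith

/-- Let `K ⊆ ℝⁿ` be a proper convex cone and `q(x) = xᵀQx` a quadratic form
whose real symmetric matrix `Q` has exactly one positive eigenvalue. Then `q` is
`K`-Lorentzian if and only if `xᵀQx > 0` for every `x` in the interior of `K`. -/
theorem stmt2 {n : ℕ} (K : Set (Fin n → ℝ)) (hK : IsProperCone K)
    (Q : Matrix (Fin n) (Fin n) ℝ) (hsymm : Q.IsHermitian) (heig : posEigCount Q = 1) :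
    IsLorentzianMatrix K Q ↔ ∀ x ∈ interior K, 0 < x ⬝ᵥ (Q *ᵥ x) := by
  constructor
  · intro hL x hx
    exact hL.2 x hx x hx
  · intro hpos
    refine ⟨heig, ?_⟩
    intro x hx y hy
    set f : (Fin n → ℝ) × (Fin n → ℝ) → ℝ := fun p => p.2 ⬝ᵥ Q *ᵥ p.1 with hf
    have hfc : Continuous f := by
      simp only [hf, dotProduct, mulVec]
      fun_prop
    set S : Set ((Fin n → ℝ) × (Fin n → ℝ)) := (interior K) ×ˢ (interior K) with hS
    have hSconn : IsPreconnected S :=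
      (hK.1.interior.prod hK.1.interior).isPreconnected
    have hne : ∀ p ∈ S, f p ≠ 0 := by
      rintro ⟨a, b⟩ ⟨ha, hb⟩
      exact key Q hsymm heig b a (hpos b hb) (hpos a ha)
    by_contra hcon
    push_neg at hcon
    have hmem1 : ((x, y) : _ × _) ∈ S := ⟨hx, hy⟩
    have hmem2 : ((x, x) : _ × _) ∈ S := ⟨hx, hx⟩
    obtain ⟨z, hzS, hz⟩ := hSconn.intermediate_value₂ hmem1 hmem2
      hfc.continuousOn continuousOn_const hcon (hpos x hx).le
    exact hne z hzS hz
end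

section
/- Let K ⊆ ℝ^n be a self-dual proper convex cone and let q(x) = xᵀQx be a K-Lorentzian quadratic form whose real symmetric matrix Q is nonsingular. Then no eigenvector of Q lies on the boundary of K; in particular, an eigenvector of Q corresponding to its unique positive eigenvalue lies (after possibly replacing it by its negative) in the interior of K. -/
open Matrix

/-! ### Auxiliary lemmas -/

section Aux

lemma expand_basis {n : ℕ} {Q : Matrix (Fin n) (Fin n) ℝ} (hsymm : Q.IsHermitian) :
    ∀ z : Fin n → ℝ, z = ∑ i, ((hsymm.eigenvectorBasis i : Fin n → ℝ) ⬝ᵥ z) •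
      (hsymm.eigenvectorBasis i : Fin n → ℝ) := by
  intro z
  have hco : ∀ i, hsymm.eigenvectorBasis.repr (WithLp.toLp 2 z) i =
      (hsymm.eigenvectorBasis i : Fin n → ℝ) ⬝ᵥ z := by
    intro i
    rw [hsymm.eigenvectorBasis.repr_apply_apply]
    simp [PiLp.inner_apply, RCLike.inner_apply, dotProduct, mul_comm]
  calc z = ∑ i, hsymm.eigenvectorBasis.repr (WithLp.toLp 2 z) i • (hsymm.eigenvectorBasis i : Fin n → ℝ) := by
        have h := congrArg WithLp.ofLp (hsymm.eigenvectorBasis.sum_repr (WithLp.toLp 2 z))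
        rw [WithLp.ofLp_sum] at h
        simpa only [WithLp.ofLp_smul] using h.symm
    _ = _ := Finset.sum_congr rfl fun i _ => by rw [hco]

lemma expandB {n : ℕ} {Q : Matrix (Fin n) (Fin n) ℝ} (hsymm : Q.IsHermitian) (x y : Fin n → ℝ) :
    y ⬝ᵥ (Q *ᵥ x) = ∑ i, hsymm.eigenvalues i *
      (((hsymm.eigenvectorBasis i : Fin n → ℝ) ⬝ᵥ x) *
        ((hsymm.eigenvectorBasis i : Fin n → ℝ) ⬝ᵥ y)) := by
  set u : Fin n → Fin n → ℝ := fun i => (hsymm.eigenvectorBasis i : Fin n → ℝ) with hu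
  have h1 : Q *ᵥ x = ∑ i, (u i ⬝ᵥ x) • (Q *ᵥ u i) := by
    conv_lhs => rw [expand_basis hsymm x]
    rw [← Matrix.mulVecLin_apply, map_sum]
    exact Finset.sum_congr rfl fun i _ => by
      rw [LinearMap.map_smul, Matrix.mulVecLin_apply]
  have h2 : y ⬝ᵥ (∑ i, (u i ⬝ᵥ x) • (Q *ᵥ u i)) = ∑ i, (u i ⬝ᵥ x) * (y ⬝ᵥ (Q *ᵥ u i)) := by
    simp only [dotProduct, Finset.sum_apply, Pi.smul_apply, smul_eq_mul, Finset.mul_sum]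
    rw [Finset.sum_comm]
    exact Finset.sum_congr rfl fun i _ => Finset.sum_congr rfl fun j _ => by ring
  rw [h1, h2]
  refine Finset.sum_congr rfl fun i _ => ?_
  have : Q *ᵥ u i = hsymm.eigenvalues i • u i := hsymm.mulVec_eigenvectorBasis i
  rw [this, dotProduct_smul]
  simp only [smul_eq_mul, hu]
  rw [dotProduct_comm y]
  ring

lemma keyReal {n : ℕ} (i₀ : Fin n) (lam c d : Fin n → ℝ) (hpos : 0 < lam i₀)
    (hneg : ∀ i, i ≠ i₀ → lam i < 0)
    (hv : 0 < ∑ i, lam i * (c i * c i))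
    (hb : ∑ i, lam i * (c i * d i) = 0)
    (hw : 0 ≤ ∑ i, lam i * (d i * d i)) : ∀ i, d i = 0 := by
  classical
  set s := Finset.univ.erase i₀ with hs
  have hsneg : ∀ i ∈ s, 0 ≤ -lam i := fun i hi =>
    neg_nonneg.2 (hneg i (Finset.ne_of_mem_erase hi)).le
  set A := ∑ i ∈ s, (-lam i) * (c i * c i) with hA
  set B := ∑ i ∈ s, (-lam i) * (d i * d i) with hB
  set C := ∑ i ∈ s, (-lam i) * (c i * d i) with hC
  have hAnn : 0 ≤ A := Finset.sum_nonneg fun i hi =>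
    mul_nonneg (hsneg i hi) (mul_self_nonneg _)
  have hBnn : 0 ≤ B := Finset.sum_nonneg fun i hi =>
    mul_nonneg (hsneg i hi) (mul_self_nonneg _)
  have split : ∀ f : Fin n → ℝ, ∑ i, f i = f i₀ + ∑ i ∈ s, f i := by
    intro f
    rw [hs, ← Finset.add_sum_erase _ f (Finset.mem_univ i₀)]
  have negsum : ∀ g : Fin n → ℝ, ∑ i ∈ s, lam i * g i = -∑ i ∈ s, (-lam i) * g i := by
    intro g
    rw [← Finset.sum_neg_distrib]
    exact Finset.sum_congr rfl fun i _ => by ring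
  have hv' : A < lam i₀ * (c i₀ * c i₀) := by
    have h0 := split (fun i => lam i * (c i * c i))
    rw [h0, negsum] at hv; rw [hA]; linarith
  have hb' : C = lam i₀ * (c i₀ * d i₀) := by
    have h0 := split (fun i => lam i * (c i * d i))
    rw [h0, negsum] at hb; rw [hC]; linarith
  have hw' : B ≤ lam i₀ * (d i₀ * d i₀) := by
    have h0 := split (fun i => lam i * (d i * d i))
    rw [h0, negsum] at hw; rw [hB]; linarith
  have hCS : C ^ 2 ≤ A * B := by
    have h := Finset.sum_mul_sq_le_sq_mul_sq s
      (fun i => Real.sqrt (-lam i) * c i) (fun i => Real.sqrt (-lam i) * d i)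
    have e1 : ∑ i ∈ s, (Real.sqrt (-lam i) * c i) * (Real.sqrt (-lam i) * d i) = C := by
      rw [hC]
      refine Finset.sum_congr rfl fun i hi => ?_
      calc (Real.sqrt (-lam i) * c i) * (Real.sqrt (-lam i) * d i)
          = (Real.sqrt (-lam i) * Real.sqrt (-lam i)) * (c i * d i) := by ring
        _ = (-lam i) * (c i * d i) := by rw [Real.mul_self_sqrt (hsneg i hi)]
    have e2 : ∑ i ∈ s, (Real.sqrt (-lam i) * c i) ^ 2 = A := by
      rw [hA]
      refine Finset.sum_congr rfl fun i hi => ?_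
      calc (Real.sqrt (-lam i) * c i) ^ 2
          = (Real.sqrt (-lam i) * Real.sqrt (-lam i)) * (c i * c i) := by ring
        _ = (-lam i) * (c i * c i) := by rw [Real.mul_self_sqrt (hsneg i hi)]
    have e3 : ∑ i ∈ s, (Real.sqrt (-lam i) * d i) ^ 2 = B := by
      rw [hB]
      refine Finset.sum_congr rfl fun i hi => ?_
      calc (Real.sqrt (-lam i) * d i) ^ 2
          = (Real.sqrt (-lam i) * Real.sqrt (-lam i)) * (d i * d i) := by ring
        _ = (-lam i) * (d i * d i) := by rw [Real.mul_self_sqrt (hsneg i hi)]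
    rw [e1, e2, e3] at h
    exact h
  have hd0 : d i₀ = 0 := by
    by_contra hd
    have hdd : 0 < d i₀ * d i₀ := mul_self_pos.2 hd
    have h1 : C ^ 2 = (lam i₀ * (c i₀ * c i₀)) * (lam i₀ * (d i₀ * d i₀)) := by rw [hb']; ring
    have h2 : A * B ≤ A * (lam i₀ * (d i₀ * d i₀)) := mul_le_mul_of_nonneg_left hw' hAnn
    have h3 : A * (lam i₀ * (d i₀ * d i₀)) <
        (lam i₀ * (c i₀ * c i₀)) * (lam i₀ * (d i₀ * d i₀)) :=
      mul_lt_mul_of_pos_right hv' (mul_pos hpos hdd)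
    linarith [hCS]
  have hB0 : B = 0 := by
    rw [hd0] at hw'
    have : B ≤ 0 := by simpa using hw'
    linarith
  intro i
  rcases eq_or_ne i i₀ with rfl | hne
  · exact hd0
  · have hiS : i ∈ s := Finset.mem_erase.2 ⟨hne, Finset.mem_univ i⟩
    have hterm : ∀ j ∈ s, 0 ≤ (-lam j) * (d j * d j) := fun j hj =>
      mul_nonneg (hsneg j hj) (mul_self_nonneg _)
    have hzero : (-lam i) * (d i * d i) = 0 :=
      (Finset.sum_eq_zero_iff_of_nonneg hterm).1 hB0 i hiS
    have hln : -lam i ≠ 0 := ne_of_gt (by linarith [hneg i hne])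
    rcases mul_eq_zero.1 hzero with h | h
    · exact absurd h hln
    · rcases mul_eq_zero.1 h with h' | h' <;> exact h'

lemma keyLA {n : ℕ} {Q : Matrix (Fin n) (Fin n) ℝ} (hsymm : Q.IsHermitian) (hns : Q.det ≠ 0)
    (h1 : posEigCount Q = 1) {v w : Fin n → ℝ} (hv : 0 < v ⬝ᵥ (Q *ᵥ v))
    (hb : w ⬝ᵥ (Q *ᵥ v) = 0) (hw : 0 ≤ w ⬝ᵥ (Q *ᵥ w)) : w = 0 := by
  classical
  have hcard : (Finset.univ.filter fun i => 0 < hsymm.eigenvalues i).card = 1 := by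
    unfold posEigCount at h1
    rwa [dif_pos hsymm] at h1
  obtain ⟨i₀, hi₀⟩ := Finset.card_eq_one.1 hcard
  have hpos : 0 < hsymm.eigenvalues i₀ := by
    have : i₀ ∈ Finset.univ.filter fun i => 0 < hsymm.eigenvalues i := by
      rw [hi₀]; exact Finset.mem_singleton_self i₀
    exact (Finset.mem_filter.1 this).2
  have hNe : ∀ i, hsymm.eigenvalues i ≠ 0 := by
    have hdet : Q.det = ∏ i, (hsymm.eigenvalues i : ℝ) := hsymm.det_eq_prod_eigenvalues
    intro i hzero
    apply hns
    rw [hdet]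
    exact Finset.prod_eq_zero (Finset.mem_univ i) (by exact_mod_cast hzero)
  have hneg : ∀ i, i ≠ i₀ → hsymm.eigenvalues i < 0 := by
    intro i hne
    have : i ∉ Finset.univ.filter fun j => 0 < hsymm.eigenvalues j := by
      rw [hi₀]; simpa using hne
    have hle : ¬ 0 < hsymm.eigenvalues i := fun h =>
      this (Finset.mem_filter.2 ⟨Finset.mem_univ i, h⟩)
    exact lt_of_le_of_ne (not_lt.1 hle) (hNe i)
  set c : Fin n → ℝ := fun i => (hsymm.eigenvectorBasis i : Fin n → ℝ) ⬝ᵥ v with hc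
  set d : Fin n → ℝ := fun i => (hsymm.eigenvectorBasis i : Fin n → ℝ) ⬝ᵥ w with hd
  have hv' : 0 < ∑ i, hsymm.eigenvalues i * (c i * c i) := by
    rw [← expandB hsymm v v]; exact hv
  have hb' : ∑ i, hsymm.eigenvalues i * (c i * d i) = 0 := by
    rw [← expandB hsymm v w]; exact hb
  have hw' : 0 ≤ ∑ i, hsymm.eigenvalues i * (d i * d i) := by
    rw [← expandB hsymm w w]; exact hw
  have hdzero := keyReal i₀ hsymm.eigenvalues c d hpos hneg hv' hb' hw'
  calc w = ∑ i, d i • (hsymm.eigenvectorBasis i : Fin n → ℝ) := expand_basis hsymm w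
    _ = 0 := by
        refine Finset.sum_eq_zero fun i _ => ?_
        rw [hdzero i, zero_smul]

lemma mem_closure_interior' {n : ℕ} {K : Set (Fin n → ℝ)} (hconv : Convex ℝ K)
    (hne : (interior K).Nonempty) {x : Fin n → ℝ} (hx : x ∈ K) :
    x ∈ closure (interior K) := by
  obtain ⟨x₀, hx₀⟩ := hne
  have hmem : ∀ k : ℕ, x + (1 / ((k : ℝ) + 1)) • (x₀ - x) ∈ interior K := by
    intro k
    refine hconv.add_smul_sub_mem_interior hx hx₀ ⟨by positivity, ?_⟩
    rw [div_le_one (by positivity)]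
    have : (0:ℝ) ≤ (k:ℝ) := Nat.cast_nonneg k
    linarith
  have h0 : Filter.Tendsto (fun k : ℕ => 1 / ((k : ℝ) + 1)) Filter.atTop (nhds 0) :=
    tendsto_one_div_add_atTop_nhds_zero_nat
  have hT : Filter.Tendsto (fun k : ℕ => x + (1 / ((k : ℝ) + 1)) • (x₀ - x))
      Filter.atTop (nhds x) := by
    have := Filter.Tendsto.const_add x ((h0.smul_const (x₀ - x)))
    simpa using this
  exact mem_closure_of_tendsto hT (Filter.Eventually.of_forall hmem)

lemma nonneg_on_K {n : ℕ} {K : Set (Fin n → ℝ)} (hconv : Convex ℝ K)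
    (hne : (interior K).Nonempty) {f : (Fin n → ℝ) → ℝ} (hf : Continuous f)
    (hfpos : ∀ y ∈ interior K, 0 ≤ f y) {x : Fin n → ℝ} (hx : x ∈ K) : 0 ≤ f x := by
  have h1 : x ∈ closure (interior K) := mem_closure_interior' hconv hne hx
  have h2 : closure (interior K) ⊆ {y | 0 ≤ f y} :=
    closure_minimal hfpos (isClosed_le continuous_const hf)
  exact h2 h1

lemma dot_self_pos {n : ℕ} {v : Fin n → ℝ} (hv : v ≠ 0) : 0 < v ⬝ᵥ v := by
  have h : ∃ i, v i ≠ 0 := by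
    by_contra h
    push_neg at h
    exact hv (funext h)
  obtain ⟨i, hi⟩ := h
  unfold dotProduct
  exact Finset.sum_pos' (fun j _ => mul_self_nonneg _) ⟨i, Finset.mem_univ i, mul_self_pos.2 hi⟩

lemma dot_int_pos {n : ℕ} {K : Set (Fin n → ℝ)} (hsd : K = dualConeSet K)
    {x v : Fin n → ℝ} (hx : x ∈ interior K) (hvK : v ∈ K) (hv0 : v ≠ 0) : 0 < v ⬝ᵥ x := by
  obtain ⟨ε, hε, hball⟩ := Metric.isOpen_iff.1 isOpen_interior x hx
  set t : ℝ := ε / (2 * (‖v‖ + 1)) with ht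
  have htpos : 0 < t := by positivity
  have hy : x - t • v ∈ K := by
    apply interior_subset
    apply hball
    rw [Metric.mem_ball, dist_eq_norm]
    have : x - t • v - x = -(t • v) := by abel
    rw [this, norm_neg, norm_smul, Real.norm_eq_abs, abs_of_pos htpos]
    calc t * ‖v‖ ≤ t * (‖v‖ + 1) := by nlinarith [norm_nonneg v]
      _ = ε / 2 := by rw [ht]; field_simp
      _ < ε := by linarith
  have hvdual : ∀ z ∈ K, 0 ≤ v ⬝ᵥ z := by rw [hsd] at hvK; exact hvK
  have h1 := hvdual _ hy
  rw [dotProduct_sub, dotProduct_smul] at h1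
  have h2 : 0 < v ⬝ᵥ v := dot_self_pos hv0
  have : t * (v ⬝ᵥ v) ≤ v ⬝ᵥ x := by simpa [smul_eq_mul] using h1
  nlinarith

lemma contDotLeft {n : ℕ} (c : Fin n → ℝ) : Continuous fun u : Fin n → ℝ => u ⬝ᵥ c := by
  unfold dotProduct
  exact continuous_finset_sum _ fun i _ => (continuous_apply i).mul continuous_const

lemma contDotRight {n : ℕ} (c : Fin n → ℝ) : Continuous fun u : Fin n → ℝ => c ⬝ᵥ u := by
  unfold dotProduct
  exact continuous_finset_sum _ fun i _ => continuous_const.mul (continuous_apply i)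

lemma contDotMulVec {n : ℕ} (Q : Matrix (Fin n) (Fin n) ℝ) (x₀ : Fin n → ℝ) :
    Continuous fun u : Fin n → ℝ => x₀ ⬝ᵥ (Q *ᵥ u) := by
  simp only [dotProduct, Matrix.mulVec]
  exact continuous_finset_sum _ fun i _ => continuous_const.mul
    (continuous_finset_sum _ fun j _ => continuous_const.mul (continuous_apply j))

lemma contQuad {n : ℕ} (Q : Matrix (Fin n) (Fin n) ℝ) :
    Continuous fun u : Fin n → ℝ => u ⬝ᵥ (Q *ᵥ u) := by
  simp only [dotProduct, Matrix.mulVec]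
  exact continuous_finset_sum _ fun i _ => (continuous_apply i).mul
    (continuous_finset_sum _ fun j _ => continuous_const.mul (continuous_apply j))

lemma zero_not_int {n : ℕ} {K : Set (Fin n → ℝ)} (hpt : K ∩ (-K) = {0}) (i : Fin n) :
    (0 : Fin n → ℝ) ∉ interior K := by
  intro h
  obtain ⟨ε, hε, hball⟩ := Metric.isOpen_iff.1 isOpen_interior 0 h
  set e : Fin n → ℝ := Pi.single i (ε / 2) with he
  have hene : ‖e‖ < ε := by
    rw [he, Pi.norm_single, Real.norm_eq_abs, abs_of_pos (by linarith)]
    linarith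
  have heK : e ∈ K := interior_subset (hball (by rwa [Metric.mem_ball, dist_zero_right]))
  have hneK : -e ∈ K := interior_subset
    (hball (by rwa [Metric.mem_ball, dist_zero_right, norm_neg]))
  have : e ∈ K ∩ (-K) := ⟨heK, by simpa [Set.mem_neg] using hneK⟩
  rw [hpt] at this
  have : e i = 0 := by rw [Set.mem_singleton_iff] at this; rw [this]; rfl
  rw [he, Pi.single_eq_same] at this
  linarith

lemma abs_dot_le {n : ℕ} (a b : Fin n → ℝ) : |a ⬝ᵥ b| ≤ (n : ℝ) * (‖a‖ * ‖b‖) := by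
  calc |a ⬝ᵥ b| ≤ ∑ i, |a i * b i| := Finset.abs_sum_le_sum_abs _ _
    _ ≤ ∑ _i : Fin n, ‖a‖ * ‖b‖ := by
        refine Finset.sum_le_sum fun i _ => ?_
        rw [abs_mul]
        exact mul_le_mul (norm_le_pi_norm a i) (norm_le_pi_norm b i) (abs_nonneg _)
          (norm_nonneg _)
    _ = (n : ℝ) * (‖a‖ * ‖b‖) := by
        rw [Finset.sum_const, Finset.card_univ, Fintype.card_fin, nsmul_eq_mul]

lemma exists_orth {n : ℕ} {K : Set (Fin n → ℝ)} (hK : IsProperCone K)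
    (hsd : K = dualConeSet K) {v : Fin n → ℝ} (hvF : v ∈ frontier K) (hv0 : v ≠ 0) :
    ∃ w ∈ K, w ≠ 0 ∧ v ⬝ᵥ w = 0 := by
  obtain ⟨hconv, hcone, hcl, hpt, hint⟩ := hK
  by_contra hcon
  push_neg at hcon
  have hvK : v ∈ K := by
    have := frontier_subset_closure hvF
    rwa [hcl.closure_eq] at this
  have hdual : ∀ w ∈ K, 0 ≤ v ⬝ᵥ w := by rw [hsd] at hvK; exact hvK
  have hpos : ∀ w ∈ K, w ≠ 0 → 0 < v ⬝ᵥ w := fun w hw h0 =>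
    (hdual w hw).lt_of_ne (Ne.symm (hcon w hw h0))
  set S := K ∩ Metric.sphere (0 : Fin n → ℝ) 1 with hS
  have hScomp : IsCompact S := (isCompact_sphere _ _).inter_left hcl
  have hunitmem : ∀ x : Fin n → ℝ, x ∈ K → x ≠ 0 → ‖x‖⁻¹ • x ∈ S := by
    intro x hx hx0
    refine ⟨hcone _ (inv_nonneg.2 (norm_nonneg _)) x hx, ?_⟩
    rw [Metric.mem_sphere, dist_zero_right, norm_smul, Real.norm_eq_abs,
      abs_of_pos (inv_pos.2 (norm_pos_iff.2 hx0)), inv_mul_cancel₀ (norm_ne_zero_iff.2 hx0)]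
  have hSne : S.Nonempty := ⟨‖v‖⁻¹ • v, hunitmem v hvK hv0⟩
  obtain ⟨w₀, hw₀S, hmin'⟩ := hScomp.exists_isMinOn hSne (contDotRight v).continuousOn
  have hmin : ∀ u ∈ S, v ⬝ᵥ w₀ ≤ v ⬝ᵥ u := fun u hu => hmin' hu
  have hw₀0 : w₀ ≠ 0 := by
    intro h
    have := hw₀S.2
    rw [h, Metric.mem_sphere, dist_self] at this
    norm_num at this
  set m := v ⬝ᵥ w₀ with hm
  have hmpos : 0 < m := hpos w₀ hw₀S.1 hw₀0
  have hball : Metric.ball v (m / (n + 1)) ⊆ K := by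
    intro y hy
    rw [Metric.mem_ball, dist_eq_norm] at hy
    rw [hsd]
    intro x hx
    rcases eq_or_ne x 0 with rfl | hx0
    · simp
    · have hxS := hunitmem x hx hx0
      set u := ‖x‖⁻¹ • x with hu
      have hnu : ‖u‖ = 1 := by
        have h := hxS.2
        rwa [Metric.mem_sphere, dist_zero_right] at h
      have h1 : m ≤ v ⬝ᵥ u := hmin u hxS
      have h2 : |(y - v) ⬝ᵥ u| ≤ (n : ℝ) * ‖y - v‖ := by
        have := abs_dot_le (y - v) u
        rwa [hnu, mul_one] at this
      have h3 : 0 ≤ y ⬝ᵥ u := by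
        have hsplit : y ⬝ᵥ u = v ⬝ᵥ u + (y - v) ⬝ᵥ u := by
          rw [sub_dotProduct]; ring
        have hb : (n : ℝ) * ‖y - v‖ ≤ (n : ℝ) * (m / (n + 1)) :=
          mul_le_mul_of_nonneg_left hy.le (Nat.cast_nonneg n)
        have hfrac : (n : ℝ) * (m / (n + 1)) < m := by
          rw [mul_div_assoc', div_lt_iff₀ (by positivity)]
          nlinarith [Nat.cast_nonneg (α := ℝ) n]
        have habs := abs_le.1 h2
        linarith [hsplit]
      have hyx : y ⬝ᵥ x = ‖x‖ * (y ⬝ᵥ u) := by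
        rw [hu, dotProduct_smul, smul_eq_mul, ← mul_assoc,
          mul_inv_cancel₀ (norm_ne_zero_iff.2 hx0), one_mul]
      rw [hyx]
      exact mul_nonneg (norm_nonneg x) h3
  have : v ∈ interior K :=
    mem_interior.2 ⟨Metric.ball v (m / (n + 1)), hball, Metric.isOpen_ball,
      Metric.mem_ball_self (by positivity)⟩
  exact hvF.2 this

lemma noBoundary {n : ℕ} (K : Set (Fin n → ℝ)) (hK : IsProperCone K) (hsd : K = dualConeSet K)
    (Q : Matrix (Fin n) (Fin n) ℝ) (hsymm : Q.IsHermitian) (hns : Q.det ≠ 0)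
    (hL : IsLorentzianMatrix K Q) :
    ∀ (v : Fin n → ℝ) (μ : ℝ), v ≠ 0 → Q *ᵥ v = μ • v → v ∉ frontier K := by
  intro v μ hv0 heig hvF
  obtain ⟨hconv, hcone, hcl, hpt, hint⟩ := hK
  obtain ⟨x₀, hx₀⟩ := hint
  have hvK : v ∈ K := by
    have := frontier_subset_closure hvF
    rwa [hcl.closure_eq] at this
  have h1 : 0 ≤ x₀ ⬝ᵥ (Q *ᵥ v) :=
    nonneg_on_K hconv ⟨x₀, hx₀⟩ (contDotMulVec Q x₀) (fun y hy => (hL.2 y hy x₀ hx₀).le) hvK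
  have hx₀v : 0 < x₀ ⬝ᵥ v := by
    have := dot_int_pos hsd hx₀ hvK hv0
    rwa [dotProduct_comm] at this
  have hμnonneg : 0 ≤ μ := by
    rw [heig, dotProduct_smul, smul_eq_mul] at h1
    nlinarith
  have hμ0 : μ ≠ 0 := by
    intro h
    rw [h, zero_smul] at heig
    have hinj : Function.Injective Q.mulVec :=
      Matrix.mulVec_injective_iff_isUnit.2
        ((Matrix.isUnit_iff_isUnit_det Q).2 (isUnit_iff_ne_zero.2 hns))
    exact hv0 (hinj (by rw [heig, Matrix.mulVec_zero]))
  have hμ : 0 < μ := hμnonneg.lt_of_ne (Ne.symm hμ0)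
  have hqv : 0 < v ⬝ᵥ (Q *ᵥ v) := by
    rw [heig, dotProduct_smul, smul_eq_mul]
    exact mul_pos hμ (dot_self_pos hv0)
  obtain ⟨w, hwK, hw0, hvw⟩ := exists_orth ⟨hconv, hcone, hcl, hpt, ⟨x₀, hx₀⟩⟩ hsd hvF hv0
  have hb : w ⬝ᵥ (Q *ᵥ v) = 0 := by
    rw [heig, dotProduct_smul, smul_eq_mul, dotProduct_comm, hvw, mul_zero]
  have hw' : 0 ≤ w ⬝ᵥ (Q *ᵥ w) :=
    nonneg_on_K hconv ⟨x₀, hx₀⟩ (contQuad Q) (fun y hy => (hL.2 y hy y hy).le) hwK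
  exact hw0 (keyLA hsymm hns hL.1 hqv hb hw')

lemma signConst {n : ℕ} {K : Set (Fin n → ℝ)} (hconv : Convex ℝ K)
    {g : (Fin n → ℝ) → ℝ} (hg : Continuous g) (hnz : ∀ x ∈ interior K, g x ≠ 0)
    {x₀ y : Fin n → ℝ} (hx₀ : x₀ ∈ interior K) (hy : y ∈ interior K)
    (hpos : 0 < g x₀) : 0 < g y := by
  by_contra h
  have hylt : g y < 0 := (not_lt.1 h).lt_of_ne (hnz y hy)
  set φ : ℝ → (Fin n → ℝ) := fun t => x₀ + t • (y - x₀) with hφ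
  have hφc : Continuous (g ∘ φ) := hg.comp (by continuity)
  have hIV := intermediate_value_Icc' (zero_le_one (α := ℝ)) hφc.continuousOn
  have h0 : (g ∘ φ) 0 = g x₀ := by simp [hφ]
  have h1 : (g ∘ φ) 1 = g y := by simp [hφ]
  have hmem : (0:ℝ) ∈ Set.Icc ((g ∘ φ) 1) ((g ∘ φ) 0) := by
    rw [h0, h1]; exact ⟨hylt.le, hpos.le⟩
  obtain ⟨t, ht01, hgt⟩ := hIV hmem
  have hz : φ t ∈ interior K := by
    have hmem2 := (hconv.interior) hx₀ hy
      (by linarith [ht01.2] : (0:ℝ) ≤ 1 - t) ht01.1 (by ring)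
    have : φ t = (1 - t) • x₀ + t • y := by
      rw [hφ]
      simp only [smul_sub, sub_smul, one_smul]
      abel
    rwa [this]
  exact hnz _ hz hgt

lemma posIn {n : ℕ} (K : Set (Fin n → ℝ)) (hK : IsProperCone K) (hsd : K = dualConeSet K)
    (Q : Matrix (Fin n) (Fin n) ℝ) (hsymm : Q.IsHermitian) (hns : Q.det ≠ 0)
    (hL : IsLorentzianMatrix K Q) (v : Fin n → ℝ) (μ : ℝ) (hv0 : v ≠ 0) (hμ : 0 < μ)
    (heig : Q *ᵥ v = μ • v) (hall : ∀ x ∈ interior K, 0 < x ⬝ᵥ (Q *ᵥ v)) :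
    v ∈ interior K := by
  have hconv := hK.1
  have hint := hK.2.2.2.2
  have hvK : v ∈ K := by
    rw [hsd]
    intro x hx
    have h0 : 0 ≤ x ⬝ᵥ (Q *ᵥ v) :=
      nonneg_on_K hconv hint (contDotLeft (Q *ᵥ v)) (fun y hy => (hall y hy).le) hx
    rw [heig, dotProduct_smul, smul_eq_mul] at h0
    have hxv : 0 ≤ x ⬝ᵥ v := by nlinarith
    rwa [dotProduct_comm]
  have hnf : v ∉ frontier K := noBoundary K hK hsd Q hsymm hns hL v μ hv0 heig
  by_contra hni
  exact hnf ⟨subset_closure hvK, hni⟩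

end Aux

/-- Let `K ⊆ ℝⁿ` be a self-dual proper convex cone and `q(x) = xᵀQx` a
`K`-Lorentzian quadratic form whose real symmetric matrix `Q` is nonsingular. Then no
eigenvector of `Q` lies on the boundary of `K`; in particular, an eigenvector of `Q` with
positive eigenvalue lies (after possibly replacing it by its negative) in the interior of `K`. -/
theorem stmt5 {n : ℕ} (K : Set (Fin n → ℝ)) (hK : IsProperCone K) (hsd : K = dualConeSet K)
    (Q : Matrix (Fin n) (Fin n) ℝ) (hsymm : Q.IsHermitian) (hns : Q.det ≠ 0)
    (hL : IsLorentzianMatrix K Q) :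
    (∀ (v : Fin n → ℝ) (μ : ℝ), v ≠ 0 → Q *ᵥ v = μ • v → v ∉ frontier K) ∧
    (∀ (v : Fin n → ℝ) (μ : ℝ), v ≠ 0 → 0 < μ → Q *ᵥ v = μ • v →
      v ∈ interior K ∨ -v ∈ interior K) := by
  constructor
  · exact noBoundary K hK hsd Q hsymm hns hL
  · intro v μ hv0 hμ heig
    have hconv := hK.1
    have hpt := hK.2.2.2.1
    obtain ⟨x₀, hx₀⟩ := hK.2.2.2.2
    have hqv : 0 < v ⬝ᵥ (Q *ᵥ v) := by
      rw [heig, dotProduct_smul, smul_eq_mul]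
      exact mul_pos hμ (dot_self_pos hv0)
    have hi : ∃ i : Fin n, v i ≠ 0 := by
      by_contra h
      push_neg at h
      exact hv0 (funext h)
    obtain ⟨i, _⟩ := hi
    have hnz : ∀ x ∈ interior K, x ⬝ᵥ (Q *ᵥ v) ≠ 0 := by
      intro x hx h
      have hx0 : x ≠ 0 := by
        intro h'
        exact zero_not_int hpt i (h' ▸ hx)
      have hqx : 0 < x ⬝ᵥ (Q *ᵥ x) := hL.2 x hx x hx
      exact hx0 (keyLA hsymm hns hL.1 hqv h hqx.le)
    have hg : Continuous fun x : Fin n → ℝ => x ⬝ᵥ (Q *ᵥ v) := contDotLeft (Q *ᵥ v)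
    rcases (hnz x₀ hx₀).lt_or_gt with hneg' | hpos'
    · right
      have heig' : Q *ᵥ (-v) = μ • (-v) := by rw [Matrix.mulVec_neg, heig, smul_neg]
      refine posIn K hK hsd Q hsymm hns hL (-v) μ (neg_ne_zero.2 hv0) hμ heig' ?_
      intro x hx
      have hgneg : Continuous fun x : Fin n → ℝ => x ⬝ᵥ (Q *ᵥ (-v)) := contDotLeft _
      have hnz' : ∀ y ∈ interior K, y ⬝ᵥ (Q *ᵥ (-v)) ≠ 0 := by
        intro y hy h
        apply hnz y hy
        rw [Matrix.mulVec_neg, dotProduct_neg, neg_eq_zero] at h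
        exact h
      have hstart : 0 < x₀ ⬝ᵥ (Q *ᵥ (-v)) := by
        rw [Matrix.mulVec_neg, dotProduct_neg]
        linarith
      exact signConst hconv hgneg hnz' hx₀ hx hstart
    · left
      refine posIn K hK hsd Q hsymm hns hL v μ hv0 hμ heig ?_
      intro x hx
      exact signConst hconv hg hnz hx₀ hx hpos'
end
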